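/- Let f : ℝⁿ → ℝ satisfy f(x) ≥ κ_f for all x, and let h : ℝⁿ → ℝᵐ satisfy ‖h(x)‖ ≤ κ_h for all x. Then for every (λ, r) ∈ ℝᵐ × (0, ∞), every s > 0, and every (x, t) ∈ ℝⁿ × (0, ∞), the barrier-augmented smoothing function satisfies L̂ˢ_{λ,r}(x,t) ≥ κ_f + min{0, (r − ‖λ‖) κ_h}; in particular L̂ˢ_{λ,r} is bounded from below on ℝⁿ × (0, ∞). -/

import Mathlib

/-- if `f ≥ κ_f` and `‖h‖ ≤ κ_h` everywhere, then the barrier-augmented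
smoothing function `L̂ˢ_{λ,r}(x,t) = f x + ⟨λ, h x⟩ + (r/(2t))‖h x‖² + (r/2)t + (r/(2t))s²`
satisfies `L̂ˢ_{λ,r}(x,t) ≥ κ_f + min{0, (r − ‖λ‖) κ_h}` on `ℝⁿ × (0, ∞)`;
in particular it is bounded from below there. -/
theorem stmt12 {n m : ℕ} (f : EuclideanSpace ℝ (Fin n) → ℝ)
    (h : EuclideanSpace ℝ (Fin n) → EuclideanSpace ℝ (Fin m))
    (hf : ContDiff ℝ 2 f) (hh : ContDiff ℝ 2 h)
    (κf κh : ℝ) (hfb : ∀ x, κf ≤ f x) (hhb : ∀ x, ‖h x‖ ≤ κh) :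
    ∀ (lam : EuclideanSpace ℝ (Fin m)) (r s : ℝ), 0 < r → 0 < s →
      (∀ (x : EuclideanSpace ℝ (Fin n)) (t : ℝ), 0 < t →
        κf + min 0 ((r - ‖lam‖) * κh) ≤
          f x + (inner ℝ lam (h x) : ℝ) + r / (2 * t) * ‖h x‖ ^ 2 + r / 2 * t
            + r / (2 * t) * s ^ 2) ∧
      ∃ c : ℝ, ∀ (x : EuclideanSpace ℝ (Fin n)) (t : ℝ), 0 < t →
        c ≤ f x + (inner ℝ lam (h x) : ℝ) + r / (2 * t) * ‖h x‖ ^ 2 + r / 2 * t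
            + r / (2 * t) * s ^ 2 := by
  intro lam r s hr hs
  have main : ∀ (x : EuclideanSpace ℝ (Fin n)) (t : ℝ), 0 < t →
      κf + min 0 ((r - ‖lam‖) * κh) ≤
        f x + (inner ℝ lam (h x) : ℝ) + r / (2 * t) * ‖h x‖ ^ 2 + r / 2 * t
          + r / (2 * t) * s ^ 2 := by
    intro x t ht
    have ha : (0:ℝ) ≤ ‖h x‖ := norm_nonneg _
    have hak : ‖h x‖ ≤ κh := hhb x
    have hinner : -(‖lam‖ * ‖h x‖) ≤ (inner ℝ lam (h x) : ℝ) := by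
      have := abs_real_inner_le_norm lam (h x)
      have := neg_abs_le (inner ℝ lam (h x) : ℝ)
      linarith
    have hamgm : r * ‖h x‖ ≤ r / (2 * t) * ‖h x‖ ^ 2 + r / 2 * t := by
      have hsq : 0 ≤ r / (2 * t) * (‖h x‖ - t) ^ 2 :=
        mul_nonneg (by positivity) (sq_nonneg _)
      have key : r / (2 * t) * ‖h x‖ ^ 2 + r / 2 * t - r * ‖h x‖
          = r / (2 * t) * (‖h x‖ - t) ^ 2 := by
        field_simp
        ring
      linarith
    have hmin : min 0 ((r - ‖lam‖) * κh) ≤ (r - ‖lam‖) * ‖h x‖ := by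
      rcases le_or_gt 0 (r - ‖lam‖) with hc | hc
      · exact le_trans (min_le_left _ _) (mul_nonneg hc ha)
      · exact le_trans (min_le_right _ _) (by nlinarith)
    have hbar : 0 ≤ r / (2 * t) * s ^ 2 := by positivity
    have hfx := hfb x
    nlinarith [norm_nonneg lam]
  exact ⟨main, κf + min 0 ((r - ‖lam‖) * κh), main⟩
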